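/- Let a, c > 0, let g₁, g₂ : ℝ → ℝ be continuously differentiable with g₁'(x) > 0 and g₂'(y) > 0 for all x, y > 0, let f : ℝ² → ℝ be continuously differentiable with f(x, y) > 0 on the open positive quadrant, and let n_X, n_Y ∈ ℝ satisfy n_X·∂f/∂x (x, y) ≤ 0 and n_Y·∂f/∂y (x, y) ≤ 0 for all x, y > 0. Then the system ẋ = a − g₁(x) + n_X f(x, y), ẏ = c − g₂(y) + n_Y f(x, y) has no nonconstant periodic solution with values in the open positive quadrant: if T > 0 and x, y : ℝ → ℝ are differentiable, T-periodic, positive-valued, and satisfy the system for all t, then x and y are constant. -/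

import Mathlib

open Set Filter Function

open scoped Topology

/-- A differentiable periodic function satisfying `u' ≥ β u` with `β < 0` pointwise
is nonnegative. -/
private lemma aux_nonneg_of_periodic {T : ℝ} (hT : 0 < T) (u du β : ℝ → ℝ)
    (hud : ∀ t, HasDerivAt u (du t) t)
    (hlb : ∀ t, β t * u t ≤ du t)
    (hβ : ∀ t, β t < 0)
    (hper : Function.Periodic u T) :
    ∀ t, 0 ≤ u t := by
  intro t₀
  by_contra hneg
  push_neg at hneg
  have hcont : Continuous u := continuous_iff_continuousAt.mpr fun t => (hud t).continuousAt
  have hdu0 : 0 < du t₀ := lt_of_lt_of_le (mul_pos_of_neg_of_neg (hβ t₀) hneg) (hlb t₀)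
  -- find a point t₃ slightly to the left of t₀ with u t₃ < u t₀
  have hslope : Tendsto (slope u t₀) (𝓝[≠] t₀) (𝓝 (du t₀)) :=
    hasDerivAt_iff_tendsto_slope.mp (hud t₀)
  have h1 : ∀ᶠ s in 𝓝[≠] t₀, 0 < slope u t₀ s :=
    hslope.eventually (eventually_gt_nhds hdu0)
  have h2 : ∀ᶠ s in 𝓝[<] t₀, 0 < slope u t₀ s :=
    h1.filter_mono (nhdsWithin_mono t₀ fun s hs => ne_of_lt hs)
  have h3 : ∀ᶠ s in 𝓝[<] t₀, t₀ - T < s :=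
    eventually_nhdsWithin_of_eventually_nhds (eventually_gt_nhds (by linarith))
  obtain ⟨t₃, hs3, hgt3, hlt3⟩ := (h2.and (h3.and eventually_mem_nhdsWithin)).exists
  have ht₃lt : t₃ < t₀ := hlt3
  have hu3 : u t₃ < u t₀ := by
    rw [slope_def_field] at hs3
    by_contra h
    push_neg at h
    have : (u t₃ - u t₀) / (t₃ - t₀) ≤ 0 :=
      div_nonpos_of_nonneg_of_nonpos (by linarith) (by linarith)
    linarith
  -- minimum over one backward period
  obtain ⟨tm, htm_mem, htm_min⟩ := isCompact_Icc.exists_isMinOn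
    (Set.nonempty_Icc.mpr (by linarith : t₀ - T ≤ t₀)) (hcont.continuousOn)
  have hmin := isMinOn_iff.mp htm_min
  have hu_end : u (t₀ - T) = u t₀ := by
    have := hper (t₀ - T); simpa using this.symm
  have htm3 : u tm ≤ u t₃ := hmin t₃ ⟨by linarith, by linarith⟩
  have htm_lt : u tm < u t₀ := by linarith
  have h5 : t₀ - T < tm := by
    rcases lt_or_eq_of_le htm_mem.1 with h | h
    · exact h
    · exfalso; rw [← h] at htm_lt; linarith
  have h6 : tm < t₀ := by
    rcases lt_or_eq_of_le htm_mem.2 with h | h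
    · exact h
    · exfalso; rw [h] at htm_lt; exact lt_irrefl _ htm_lt
  have hloc : IsLocalMin u tm := htm_min.isLocalMin (Icc_mem_nhds h5 h6)
  have hzero : du tm = 0 := hloc.hasDerivAt_eq_zero (hud tm)
  have : 0 < du tm :=
    lt_of_lt_of_le (mul_pos_of_neg_of_neg (hβ tm) (by linarith)) (hlb tm)
  linarith

/-- Once positive, a function satisfying `u' = α u + w` with `w ≥ 0` (where `u > 0`)
and `α` bounded below stays positive on a given interval. -/
private lemma aux_stay_pos {s e : ℝ} (hse : s ≤ e) (u α w : ℝ → ℝ) (K : ℝ)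
    (hud : ∀ t, HasDerivAt u (α t * u t + w t) t)
    (hK : ∀ t ∈ Set.Icc s e, 0 ≤ α t + K)
    (hw : ∀ t ∈ Set.Icc s e, 0 < u t → 0 ≤ w t)
    (hus : 0 < u s) :
    ∀ t ∈ Set.Icc s e, 0 < u t := by
  by_contra hcon
  push_neg at hcon
  obtain ⟨t', ht', ht'le⟩ := hcon
  have hcont : Continuous u := continuous_iff_continuousAt.mpr fun t => (hud t).continuousAt
  set Z : Set ℝ := Icc s e ∩ {t | u t ≤ 0} with hZ
  have hZne : Z.Nonempty := ⟨t', ht', ht'le⟩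
  have hZc : IsClosed Z := isClosed_Icc.inter (isClosed_le hcont continuous_const)
  have hZbd : BddBelow Z := bddBelow_Icc.mono inter_subset_left
  set t₁ := sInf Z with ht₁
  have ht₁Z : t₁ ∈ Z := hZc.csInf_mem hZne hZbd
  have ht₁s : s ≤ t₁ := ht₁Z.1.1
  have ht₁e : t₁ ≤ e := ht₁Z.1.2
  have ht₁u : u t₁ ≤ 0 := ht₁Z.2
  have hslt : s < t₁ := lt_of_le_of_ne ht₁s (fun h => by rw [← h] at ht₁u; linarith)
  have hpos : ∀ τ ∈ Ico s t₁, 0 < u τ := by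
    intro τ hτ
    by_contra hτc
    push_neg at hτc
    have hmemZ : τ ∈ Z := ⟨⟨hτ.1, le_trans hτ.2.le ht₁e⟩, hτc⟩
    have hle := csInf_le hZbd hmemZ
    rw [← ht₁] at hle
    linarith [hτ.2]
  have hvd : ∀ t, HasDerivAt (fun t => u t * Real.exp (K * t))
      (((α t + K) * u t + w t) * Real.exp (K * t)) t := by
    intro t
    have he : HasDerivAt (fun s : ℝ => Real.exp (K * s)) (K * Real.exp (K * t)) t := by
      simpa [mul_comm] using ((hasDerivAt_id t).const_mul K).exp
    have h := (hud t).mul he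
    refine h.congr_deriv ?_
    ring
  have hvmono : MonotoneOn (fun t => u t * Real.exp (K * t)) (Icc s t₁) := by
    apply monotoneOn_of_deriv_nonneg (convex_Icc _ _)
    · exact (hcont.mul (Real.continuous_exp.comp (continuous_const.mul continuous_id))).continuousOn
    · intro t _
      exact (hvd t).differentiableAt.differentiableWithinAt
    · intro t ht
      rw [interior_Icc] at ht
      rw [(hvd t).deriv]
      have htmem : t ∈ Icc s e := ⟨ht.1.le, le_trans ht.2.le ht₁e⟩
      have hupos : 0 < u t := hpos t ⟨ht.1.le, ht.2⟩
      have h1 := hK t htmem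
      have h2 := hw t htmem hupos
      have h3 := (Real.exp_pos (K * t)).le
      nlinarith [mul_nonneg (mul_nonneg h1 hupos.le) h3, mul_nonneg h2 h3]
  have hv1 : u s * Real.exp (K * s) ≤ u t₁ * Real.exp (K * t₁) :=
    hvmono (left_mem_Icc.mpr hslt.le) (right_mem_Icc.mpr hslt.le) hslt.le
  nlinarith [mul_pos hus (Real.exp_pos (K * s)),
    mul_nonneg (neg_nonneg.mpr ht₁u) (Real.exp_pos (K * t₁)).le]

/-- A continuous periodic function is bounded below. -/
private lemma aux_bound {T : ℝ} (hT : 0 < T) (α : ℝ → ℝ) (hc : Continuous α)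
    (hper : Function.Periodic α T) : ∃ K : ℝ, ∀ t, 0 ≤ α t + K := by
  obtain ⟨tm, htm, hmin⟩ := isCompact_Icc.exists_isMinOn (s := Icc (0 : ℝ) T)
    (nonempty_Icc.mpr hT.le) hc.continuousOn
  refine ⟨-α tm, fun t => ?_⟩
  obtain ⟨s, hs, hst⟩ := hper.exists_mem_Ico₀ hT t
  have := isMinOn_iff.mp hmin s ⟨hs.1, hs.2.le⟩
  rw [hst]
  linarith

/-- Derivative of a periodic function, satisfying `u' = α u + w` with the
appropriate one-sided sign conditions on `w`, can never be positive. -/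
private lemma aux_deriv_nonpos {T : ℝ} (hT : 0 < T) (X u α w : ℝ → ℝ)
    (hX : ∀ t, HasDerivAt X (u t) t)
    (hXper : Function.Periodic X T)
    (hud : ∀ t, HasDerivAt u (α t * u t + w t) t)
    (hKex : ∃ K : ℝ, ∀ t, 0 ≤ α t + K)
    (hw : ∀ t, 0 < u t → 0 ≤ w t) :
    ∀ t, u t ≤ 0 := by
  intro t₀
  by_contra hcon
  push_neg at hcon
  obtain ⟨K, hK⟩ := hKex
  have hpos : ∀ t ∈ Icc t₀ (t₀ + T), 0 < u t :=
    aux_stay_pos (by linarith) u α w K hud (fun t _ => hK t) (fun t _ => hw t) hcon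
  have hmono : StrictMonoOn X (Icc t₀ (t₀ + T)) := by
    apply strictMonoOn_of_deriv_pos (convex_Icc _ _)
      (Continuous.continuousOn (continuous_iff_continuousAt.mpr fun t => (hX t).continuousAt))
    intro t ht
    rw [interior_Icc] at ht
    rw [(hX t).deriv]
    exact hpos t ⟨ht.1.le, ht.2.le⟩
  have h1 : X t₀ < X (t₀ + T) :=
    hmono (left_mem_Icc.mpr (by linarith)) (right_mem_Icc.mpr (by linarith)) (by linarith)
  rw [hXper t₀] at h1
  exact lt_irrefl _ h1

private lemma aux_deriv_zero {T : ℝ} (hT : 0 < T) (X u α w : ℝ → ℝ)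
    (hX : ∀ t, HasDerivAt X (u t) t)
    (hXper : Function.Periodic X T)
    (hud : ∀ t, HasDerivAt u (α t * u t + w t) t)
    (hKex : ∃ K : ℝ, ∀ t, 0 ≤ α t + K)
    (hw : ∀ t, (0 < u t → 0 ≤ w t) ∧ (u t < 0 → w t ≤ 0)) :
    ∀ t, u t = 0 := by
  have h1 := aux_deriv_nonpos hT X u α w hX hXper hud hKex fun t => (hw t).1
  have h2 : ∀ t, -u t ≤ 0 := by
    refine aux_deriv_nonpos hT (fun t => -X t) (fun t => -u t) α (fun t => -w t)
      (fun t => (hX t).neg) (fun t => by simp [hXper t])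
      (fun t => ?_) hKex (fun t ht => ?_)
    · have h := (hud t).neg
      refine h.congr_deriv ?_
      ring
    · show (0 : ℝ) ≤ -w t
      rw [neg_nonneg]
      refine (hw t).2 ?_
      have : (0 : ℝ) < -u t := ht
      linarith
  intro t
  have ha := h1 t
  have hb := h2 t
  linarith

/-- Under the sign conditions `n_X f_x ≤ 0` and `n_Y f_y ≤ 0` on the open positive
quadrant, the system `ẋ = a − g₁(x) + n_X f(x,y)`, `ẏ = c − g₂(y) + n_Y f(x,y)`
has no nonconstant positive periodic solution. -/
theorem stmt_7 (a c : ℝ) (ha : 0 < a) (hc : 0 < c)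
    (g₁ g₂ : ℝ → ℝ) (hg₁ : ContDiff ℝ 1 g₁) (hg₂ : ContDiff ℝ 1 g₂)
    (hg₁' : ∀ x : ℝ, 0 < x → 0 < deriv g₁ x)
    (hg₂' : ∀ y : ℝ, 0 < y → 0 < deriv g₂ y)
    (f : ℝ × ℝ → ℝ) (hf : ContDiff ℝ 1 f)
    (hfpos : ∀ p : ℝ × ℝ, 0 < p.1 → 0 < p.2 → 0 < f p)
    (nX nY : ℝ)
    (hnX : ∀ p : ℝ × ℝ, 0 < p.1 → 0 < p.2 → nX * fderiv ℝ f p (1, 0) ≤ 0)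
    (hnY : ∀ p : ℝ × ℝ, 0 < p.1 → 0 < p.2 → nY * fderiv ℝ f p (0, 1) ≤ 0)
    (T : ℝ) (hT : 0 < T) (x y : ℝ → ℝ)
    (hx : Differentiable ℝ x) (hy : Differentiable ℝ y)
    (hxper : Function.Periodic x T) (hyper : Function.Periodic y T)
    (hxpos : ∀ t : ℝ, 0 < x t) (hypos : ∀ t : ℝ, 0 < y t)
    (hxd : ∀ t : ℝ, deriv x t = a - g₁ (x t) + nX * f (x t, y t))
    (hyd : ∀ t : ℝ, deriv y t = c - g₂ (y t) + nY * f (x t, y t)) :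
    (∀ t : ℝ, x t = x 0) ∧ (∀ t : ℝ, y t = y 0) := by
  classical
  set fx : ℝ → ℝ := fun t => fderiv ℝ f (x t, y t) (1, 0) with hfx
  set fy : ℝ → ℝ := fun t => fderiv ℝ f (x t, y t) (0, 1) with hfy
  set p : ℝ → ℝ := fun t => a - g₁ (x t) + nX * f (x t, y t) with hp
  set q : ℝ → ℝ := fun t => c - g₂ (y t) + nY * f (x t, y t) with hq
  set A : ℝ → ℝ := fun t => -deriv g₁ (x t) + nX * fx t with hA
  set B : ℝ → ℝ := fun t => nX * fy t with hB
  set C : ℝ → ℝ := fun t => nY * fx t with hC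
  set D : ℝ → ℝ := fun t => -deriv g₂ (y t) + nY * fy t with hD
  have hxx : ∀ t, HasDerivAt x (p t) t := by
    intro t
    have h := (hx t).hasDerivAt
    rw [hxd t] at h
    simp only [hp]
    exact h
  have hyy : ∀ t, HasDerivAt y (q t) t := by
    intro t
    have h := (hy t).hasDerivAt
    rw [hyd t] at h
    simp only [hq]
    exact h
  have hL : ∀ (t : ℝ) (v w : ℝ), fderiv ℝ f (x t, y t) (v, w) = v * fx t + w * fy t := by
    intro t v w
    simp only [hfx, hfy]
    have hvw : (v, w) = v • ((1 : ℝ), (0 : ℝ)) + w • ((0 : ℝ), (1 : ℝ)) := by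
      simp [Prod.ext_iff]
    rw [hvw, map_add, map_smul, map_smul, smul_eq_mul, smul_eq_mul]
  have hfc : ∀ t, HasDerivAt (fun s => f (x s, y s)) (p t * fx t + q t * fy t) t := by
    intro t
    have hprod : HasDerivAt (fun s => (x s, y s)) (p t, q t) t := (hxx t).prodMk (hyy t)
    have hdf : HasFDerivAt f (fderiv ℝ f (x t, y t)) (x t, y t) :=
      ((hf.differentiable one_ne_zero) (x t, y t)).hasFDerivAt
    have h := hdf.comp_hasDerivAt t hprod
    rwa [hL t (p t) (q t)] at h
  have hg₁x : ∀ t, HasDerivAt (fun s => g₁ (x s)) (deriv g₁ (x t) * p t) t := fun t =>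
    HasDerivAt.comp t ((hg₁.differentiable one_ne_zero) (x t)).hasDerivAt (hxx t)
  have hg₂y : ∀ t, HasDerivAt (fun s => g₂ (y s)) (deriv g₂ (y t) * q t) t := fun t =>
    HasDerivAt.comp t ((hg₂.differentiable one_ne_zero) (y t)).hasDerivAt (hyy t)
  have hpd : ∀ t, HasDerivAt p (A t * p t + B t * q t) t := by
    intro t
    have h := ((hasDerivAt_const t a).sub (hg₁x t)).add ((hfc t).const_mul nX)
    simp only [hp, hA, hB]
    refine h.congr_deriv ?_
    simp only [hp, hfx, hfy]
    ring
  have hqd : ∀ t, HasDerivAt q (D t * q t + C t * p t) t := by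
    intro t
    have h := ((hasDerivAt_const t c).sub (hg₂y t)).add ((hfc t).const_mul nY)
    simp only [hq, hD, hC]
    refine h.congr_deriv ?_
    simp only [hp, hq, hfx, hfy]
    ring
  have hpper : Function.Periodic p T := by
    intro t; simp only [hp]; rw [hxper t, hyper t]
  have hqper : Function.Periodic q T := by
    intro t; simp only [hq]; rw [hxper t, hyper t]
  have hAper : Function.Periodic A T := by
    intro t; simp only [hA, hfx]; rw [hxper t, hyper t]
  have hDper : Function.Periodic D T := by
    intro t; simp only [hD, hfy]; rw [hxper t, hyper t]
  have hxc : Continuous x := hx.continuous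
  have hyc : Continuous y := hy.continuous
  have hfderivc : Continuous fun z : ℝ × ℝ => fderiv ℝ f z := hf.continuous_fderiv one_ne_zero
  have hfxc : Continuous fx := by
    simp only [hfx]
    exact (hfderivc.comp (hxc.prodMk hyc)).clm_apply continuous_const
  have hfyc : Continuous fy := by
    simp only [hfy]
    exact (hfderivc.comp (hxc.prodMk hyc)).clm_apply continuous_const
  have hAc : Continuous A := by
    simp only [hA]
    exact (((hg₁.continuous_deriv le_rfl).comp hxc).neg).add (continuous_const.mul hfxc)
  have hDc : Continuous D := by
    simp only [hD]
    exact (((hg₂.continuous_deriv le_rfl).comp hyc).neg).add (continuous_const.mul hfyc)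
  obtain ⟨KA, hKA⟩ := aux_bound hT A hAc hAper
  obtain ⟨KD, hKD⟩ := aux_bound hT D hDc hDper
  have killp : (∀ t, (0 < p t → 0 ≤ B t * q t) ∧ (p t < 0 → B t * q t ≤ 0)) →
      ∀ t, p t = 0 :=
    fun hsg => aux_deriv_zero hT x p A (fun t => B t * q t) hxx hxper hpd ⟨KA, hKA⟩ hsg
  have killq : (∀ t, (0 < q t → 0 ≤ C t * p t) ∧ (q t < 0 → C t * p t ≤ 0)) →
      ∀ t, q t = 0 :=
    fun hsg => aux_deriv_zero hT y q D (fun t => C t * p t) hyy hyper hqd ⟨KD, hKD⟩ hsg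
  have final : (∀ t, p t = 0) → (∀ t, q t = 0) →
      (∀ t : ℝ, x t = x 0) ∧ (∀ t : ℝ, y t = y 0) := by
    intro hp0 hq0
    constructor
    · intro t
      refine is_const_of_deriv_eq_zero hx (fun s => ?_) t 0
      rw [hxd s]
      have h := hp0 s
      simp only [hp] at h
      exact h
    · intro t
      refine is_const_of_deriv_eq_zero hy (fun s => ?_) t 0
      rw [hyd s]
      have h := hq0 s
      simp only [hq] at h
      exact h
  have hfxsign : ∀ t, nX * fx t ≤ 0 := fun t => by
    simp only [hfx]; exact hnX (x t, y t) (hxpos t) (hypos t)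
  have hfysign : ∀ t, nY * fy t ≤ 0 := fun t => by
    simp only [hfy]; exact hnY (x t, y t) (hxpos t) (hypos t)
  rcases eq_or_ne nX 0 with h0 | hnX0
  · have hp0 : ∀ t, p t = 0 := killp (by
      intro t
      constructor <;> intro _ <;> simp [hB, h0])
    refine final hp0 (killq ?_)
    intro t
    constructor <;> intro _ <;> simp [hp0 t]
  rcases eq_or_ne nY 0 with h0 | hnY0
  · have hq0 : ∀ t, q t = 0 := killq (by
      intro t
      constructor <;> intro _ <;> simp [hC, h0])
    refine final (killp ?_) hq0
    intro t
    constructor <;> intro _ <;> simp [hq0 t]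
  -- both stoichiometric coefficients nonzero: the system is cooperative or competitive
  obtain ⟨ε, hε1, hεB, hεC⟩ :
      ∃ ε : ℝ, ε * ε = 1 ∧ (∀ t, 0 ≤ ε * B t) ∧ (∀ t, 0 ≤ ε * C t) := by
    rcases hnX0.lt_or_gt with hXneg | hXpos <;> rcases hnY0.lt_or_gt with hYneg | hYpos
    · -- nX < 0, nY < 0 : competitive, ε = -1
      refine ⟨-1, by norm_num, fun t => ?_, fun t => ?_⟩
      · have h1 := hfysign t
        have hy0 : 0 ≤ fy t := by nlinarith
        simp only [hB]; nlinarith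
      · have h1 := hfxsign t
        have hx0 : 0 ≤ fx t := by nlinarith
        simp only [hC]; nlinarith
    · -- nX < 0, nY > 0 : cooperative, ε = 1
      refine ⟨1, by norm_num, fun t => ?_, fun t => ?_⟩
      · have h1 := hfysign t
        have hy0 : fy t ≤ 0 := by nlinarith
        simp only [hB]; nlinarith
      · have h1 := hfxsign t
        have hx0 : 0 ≤ fx t := by nlinarith
        simp only [hC]; nlinarith
    · -- nX > 0, nY < 0 : cooperative, ε = 1
      refine ⟨1, by norm_num, fun t => ?_, fun t => ?_⟩
      · have h1 := hfysign t
        have hy0 : 0 ≤ fy t := by nlinarith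
        simp only [hB]; nlinarith
      · have h1 := hfxsign t
        have hx0 : fx t ≤ 0 := by nlinarith
        simp only [hC]; nlinarith
    · -- nX > 0, nY > 0 : competitive, ε = -1
      refine ⟨-1, by norm_num, fun t => ?_, fun t => ?_⟩
      · have h1 := hfysign t
        have hy0 : fy t ≤ 0 := by nlinarith
        simp only [hB]; nlinarith
      · have h1 := hfxsign t
        have hx0 : fx t ≤ 0 := by nlinarith
        simp only [hC]; nlinarith
  have hβ : ∀ t, A t + D t < 0 := by
    intro t
    have h1 := hfxsign t
    have h2 := hfysign t
    have h3 := hg₁' (x t) (hxpos t)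
    have h4 := hg₂' (y t) (hypos t)
    simp only [hA, hD]
    linarith
  have hrd : ∀ t, HasDerivAt (fun s => ε * (p s * q s))
      (ε * ((A t * p t + B t * q t) * q t + p t * (D t * q t + C t * p t))) t :=
    fun t => ((hpd t).mul (hqd t)).const_mul ε
  have hrper : Function.Periodic (fun s => ε * (p s * q s)) T := by
    intro t; simp only; rw [hpper t, hqper t]
  have hrnn : ∀ t, 0 ≤ ε * (p t * q t) := by
    refine aux_nonneg_of_periodic hT _ _ (fun t => A t + D t) hrd ?_ hβ hrper
    intro t
    show (A t + D t) * (ε * (p t * q t)) ≤ _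
    have h1 := mul_nonneg (hεB t) (sq_nonneg (q t))
    have h2 := mul_nonneg (hεC t) (sq_nonneg (p t))
    nlinarith [h1, h2]
  have keymul : ∀ u v : ℝ, ε * u * (ε * v) = u * v := by
    intro u v
    calc ε * u * (ε * v) = ε * ε * (u * v) := by ring
      _ = u * v := by rw [hε1, one_mul]
  have hsignp : ∀ t, (0 < p t → 0 ≤ B t * q t) ∧ (p t < 0 → B t * q t ≤ 0) := by
    intro t
    have hr := hrnn t
    have hb := hεB t
    constructor
    · intro hp'
      have hq' : 0 ≤ ε * q t := by nlinarith
      have h := mul_nonneg hb hq'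
      rwa [keymul] at h
    · intro hp'
      have hq' : ε * q t ≤ 0 := by nlinarith
      have h : ε * B t * (ε * q t) ≤ 0 := mul_nonpos_iff.mpr (Or.inl ⟨hb, hq'⟩)
      rwa [keymul] at h
  have hsignq : ∀ t, (0 < q t → 0 ≤ C t * p t) ∧ (q t < 0 → C t * p t ≤ 0) := by
    intro t
    have hr := hrnn t
    have hcc := hεC t
    constructor
    · intro hq'
      have hp' : 0 ≤ ε * p t := by nlinarith
      have h := mul_nonneg hcc hp'
      rwa [keymul] at h
    · intro hq'
      have hp' : ε * p t ≤ 0 := by nlinarith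
      have h : ε * C t * (ε * p t) ≤ 0 := mul_nonpos_iff.mpr (Or.inl ⟨hcc, hp'⟩)
      rwa [keymul] at h
  exact final (killp hsignp) (killq hsignq)
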